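/- Let π be a set of primes, let G be a finite π-separable group, and let H be a subgroup of G. Suppose μ is a π-special character of H, let ν = μ^π, and assume that the induced π-partial character φ = ν^G lies in I_π(G). If λ is a π'-special linear character of H, then the induced character (μλ)^G satisfies ((μλ)^G)^π = φ, i.e., (μλ)^G is a π-lift of φ. -/

import Mathlib

open scoped Classical

noncomputable section

/-- `χ` is a (complex) character of `G`: the character of some finite-dimensional
complex representation of `G`. -/
def IsChar {G : Type} [Group G] (χ : G → ℂ) : Prop :=
  ∃ V : FDRep ℂ G, V.character = χ

/-- The induced class function `θ^G` of a function `θ` on a subgroup `H ≤ G`,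
given by the usual induction formula (extend `θ` by zero outside `H` and average
over conjugates). -/
def Ind {G : Type} [Group G] [Fintype G] (H : Subgroup G) (θ : ↥H → ℂ) : G → ℂ :=
  fun g => (Nat.card ↥H : ℂ)⁻¹ *
    ∑ x : G, if h : x⁻¹ * g * x ∈ H then θ ⟨x⁻¹ * g * x, h⟩ else 0

/-- `χ` is an irreducible character: a nonzero character that is not the sum of
two nonzero characters. -/
def IsIrredChar {G : Type} [Group G] (χ : G → ℂ) : Prop :=
  IsChar χ ∧ χ ≠ 0 ∧
    ∀ α β : G → ℂ, IsChar α → IsChar β → α ≠ 0 → β ≠ 0 → χ ≠ α + β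

/-- `χ` is monomial: induced from a linear character of some subgroup. -/
def IsMonomialChar {G : Type} [Group G] [Fintype G] (χ : G → ℂ) : Prop :=
  ∃ (H : Subgroup G) (lam : ↥H → ℂ), IsChar lam ∧ lam 1 = 1 ∧ Ind H lam = χ

/-- `χ` is primitive: irreducible and not induced from any character of a proper
subgroup. -/
def IsPrimitiveChar {G : Type} [Group G] [Fintype G] (χ : G → ℂ) : Prop :=
  IsIrredChar χ ∧ ∀ H : Subgroup G, H ≠ ⊤ → ∀ θ : ↥H → ℂ, IsChar θ → Ind H θ ≠ χ

/-- `χ` is super-monomial: irreducible, and every primitive character of a subgroup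
of `G` that induces `χ` is linear. -/
def IsSuperMonomialChar {G : Type} [Group G] [Fintype G] (χ : G → ℂ) : Prop :=
  IsIrredChar χ ∧
    ∀ (H : Subgroup G) (θ : ↥H → ℂ), IsPrimitiveChar θ → Ind H θ = χ → θ 1 = 1

/-- `G` is an `M`-group: every irreducible character is monomial. -/
def IsMGroup (G : Type) [Group G] [Fintype G] : Prop :=
  ∀ χ : G → ℂ, IsIrredChar χ → IsMonomialChar χ

/-- `G` is a super `M`-group: every irreducible character is super-monomial. -/
def IsSuperMGroup (G : Type) [Group G] [Fintype G] : Prop :=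
  ∀ χ : G → ℂ, IsIrredChar χ → IsSuperMonomialChar χ

/-- `n` is a `π`-number: all of its prime divisors lie in `π`. -/
def IsPiNumber (π : Set ℕ) (n : ℕ) : Prop :=
  ∀ q : ℕ, q.Prime → q ∣ n → q ∈ π

/-- `g` is a `π`-element: its order is a `π`-number. -/
def IsPiElement (π : Set ℕ) {G : Type} [Group G] (g : G) : Prop :=
  IsPiNumber π (orderOf g)

/-- The `π`-partial character `χ^π`: the restriction of `χ` to the set `G^π` of
`π`-elements of `G`, encoded as the function that agrees with `χ` on `π`-elements
and is `0` elsewhere. -/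
def restPi (π : Set ℕ) {G : Type} [Group G] (χ : G → ℂ) : G → ℂ :=
  fun g => if IsPiElement π g then χ g else 0

/-- `φ` is a `π`-partial character of `G`: the restriction to `G^π` of some
character of `G`. -/
def IsPartialChar (π : Set ℕ) {G : Type} [Group G] (φ : G → ℂ) : Prop :=
  ∃ χ : G → ℂ, IsChar χ ∧ φ = restPi π χ

/-- `φ` is an irreducible `π`-partial character (i.e. `φ ∈ I_π(G)`): a nonzero
`π`-partial character that is not the sum of two nonzero `π`-partial characters. -/
def IsIrredPartialChar (π : Set ℕ) {G : Type} [Group G] (φ : G → ℂ) : Prop :=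
  IsPartialChar π φ ∧ φ ≠ 0 ∧
    ∀ α β : G → ℂ, IsPartialChar π α → IsPartialChar π β → α ≠ 0 → β ≠ 0 → φ ≠ α + β

/-- A `π`-partial character is monomial if it is induced from a linear `π`-partial
character of some subgroup. -/
def IsMonomialPartialChar (π : Set ℕ) {G : Type} [Group G] [Fintype G] (φ : G → ℂ) : Prop :=
  ∃ (H : Subgroup G) (lam : ↥H → ℂ), IsPartialChar π lam ∧ lam 1 = 1 ∧ Ind H lam = φ

/-- A `π`-partial character is primitive if it is irreducible and not induced from a
`π`-partial character of any proper subgroup. -/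
def IsPrimitivePartialChar (π : Set ℕ) {G : Type} [Group G] [Fintype G] (φ : G → ℂ) : Prop :=
  IsIrredPartialChar π φ ∧
    ∀ H : Subgroup G, H ≠ ⊤ → ∀ θ : ↥H → ℂ, IsPartialChar π θ → Ind H θ ≠ φ

/-- A `π`-partial character is super-monomial if every primitive irreducible
`π`-partial character of a subgroup of `G` inducing it is linear. -/
def IsSuperMonomialPartialChar (π : Set ℕ) {G : Type} [Group G] [Fintype G] (φ : G → ℂ) : Prop :=
  ∀ (H : Subgroup G) (θ : ↥H → ℂ), IsPrimitivePartialChar π θ → Ind H θ = φ → θ 1 = 1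

/-- `G` is `π`-separable: every composition factor of `G` (the simple factor of any
composition series of `G`) is a `π`-group or a `π'`-group. -/
def IsPiSeparable (π : Set ℕ) (G : Type) [Group G] : Prop :=
  ∀ (n : ℕ) (f : Fin (n + 1) → Subgroup G), f 0 = ⊥ → f (Fin.last n) = ⊤ →
    (∀ i : Fin n,
      f i.castSucc < f i.succ ∧ ((f i.castSucc).subgroupOf (f i.succ)).Normal ∧
      -- the factor `f i.succ / f i.castSucc` is simple
      (∀ L : Subgroup ↥(f i.succ), L.Normal → (f i.castSucc).subgroupOf (f i.succ) < L →
        L = ⊤)) →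
    ∀ i : Fin n,
      IsPiNumber π (Nat.card (↥(f i.succ) ⧸ (f i.castSucc).subgroupOf (f i.succ))) ∨
      IsPiNumber πᶜ (Nat.card (↥(f i.succ) ⧸ (f i.castSucc).subgroupOf (f i.succ)))

/-- `S` is a subnormal subgroup of `G`. -/
def IsSubnormal {G : Type} [Group G] (S : Subgroup G) : Prop :=
  ∃ (n : ℕ) (f : Fin (n + 1) → Subgroup G), f 0 = S ∧ f (Fin.last n) = ⊤ ∧
    ∀ i : Fin n, f i.castSucc ≤ f i.succ ∧ ((f i.castSucc).subgroupOf (f i.succ)).Normal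

/-- The determinant character of a representation `V`: `g ↦ det (ρ_V g)`. -/
def detHom {G : Type} [Group G] (V : FDRep ℂ G) : G →* ℂ :=
  LinearMap.det.comp V.ρ

/-- `χ` is a `π`-special character of `H`: `χ` is irreducible, `χ(1)` is a
`π`-number, and for every subnormal subgroup `S` of `H` and every irreducible
constituent `θ` of the restriction of `χ` to `S`, the order of the determinant
character of `θ` is a `π`-number. -/
def IsPiSpecial (π : Set ℕ) {H : Type} [Group H] (χ : H → ℂ) : Prop :=
  IsIrredChar χ ∧ (∃ d : ℕ, χ 1 = (d : ℂ) ∧ IsPiNumber π d) ∧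
    ∀ S : Subgroup H, IsSubnormal S →
      ∀ θ : ↥S → ℂ, IsIrredChar θ →
        (∃ ψ : ↥S → ℂ, IsChar ψ ∧ (fun s : ↥S => χ ↑s) = θ + ψ) →
          ∀ V : FDRep ℂ ↥S, V.character = θ → IsPiNumber π (orderOf (detHom V))

/-- `M` is a Frobenius group with Frobenius kernel `N`: `N` is a nontrivial proper
normal subgroup of `M` such that the centralizer of every nonidentity element of
`N` is contained in `N`. -/
def IsFrobeniusKernel {M : Type} [Group M] (N : Subgroup M) : Prop :=
  N ≠ ⊥ ∧ N ≠ ⊤ ∧ N.Normal ∧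
    ∀ x ∈ N, x ≠ 1 → ∀ y : M, y * x = x * y → y ∈ N


lemma restPi_Ind' (π : Set ℕ) {G : Type} [Group G] [Fintype G] (H : Subgroup G) (θ : ↥H → ℂ) :
    restPi π (Ind H θ) = Ind H (restPi π θ) := by
  funext g
  have key : ∀ (x : G) (h : x⁻¹ * g * x ∈ H),
      IsPiElement π (⟨x⁻¹ * g * x, h⟩ : ↥H) ↔ IsPiElement π g := by
    intro x h
    unfold IsPiElement
    rw [Subgroup.orderOf_mk]
    have : orderOf (x⁻¹ * g * x) = orderOf g := by
      have := MulEquiv.orderOf_eq (MulAut.conj x⁻¹) g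
      simpa [MulAut.conj_apply, mul_assoc] using this
    rw [this]
  by_cases hg : IsPiElement π g
  · rw [restPi]
    simp only [if_pos hg, Ind]
    congr 1
    refine Finset.sum_congr rfl fun x _ => ?_
    split_ifs with h
    · rw [restPi, if_pos ((key x h).mpr hg)]
    · rfl
  · rw [restPi]
    simp only [if_neg hg, Ind]
    rw [Finset.sum_eq_zero, mul_zero]
    intro x _
    split_ifs with h
    · rw [restPi, if_neg (fun hp => hg ((key x h).mp hp))]
    · rfl

lemma trace_eq_det_of_rank_one' {V : Type} [AddCommGroup V] [Module ℂ V] [FiniteDimensional ℂ V]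
    (h : Module.finrank ℂ V = 1) (f : V →ₗ[ℂ] V) :
    LinearMap.trace ℂ V f = LinearMap.det f := by
  have b : Module.Basis (Fin 1) ℂ V := Module.finBasisOfFinrankEq ℂ V h
  rw [LinearMap.trace_eq_matrix_trace ℂ b, ← LinearMap.det_toMatrix b,
    Matrix.trace_fin_one, Matrix.det_fin_one]

lemma isChar_zero' {K : Type} [Group K] : IsChar (0 : K → ℂ) := by
  refine ⟨FDRep.of (1 : Representation ℂ K (Fin 0 → ℂ)), ?_⟩
  funext g
  show LinearMap.trace ℂ (Fin 0 → ℂ) ((1 : Representation ℂ K (Fin 0 → ℂ)) g) = 0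
  rw [MonoidHom.one_apply, LinearMap.trace_one]
  simp

lemma lam_eq_one_on_pi' (π : Set ℕ) {K : Type} [Group K] [Finite K]
    (lam : K → ℂ) (hlam : IsPiSpecial πᶜ lam) (hlin : lam 1 = 1)
    (k : K) (hk : IsPiElement π k) : lam k = 1 := by
  obtain ⟨W, hW⟩ := hlam.1.1
  have hr : Module.finrank ℂ W = 1 := by
    have h1 := FDRep.char_one W
    rw [hW, hlin] at h1
    exact_mod_cast h1.symm
  have htr : ∀ x : K, lam x = LinearMap.det (W.ρ x) := by
    intro x
    rw [← hW]
    exact trace_eq_det_of_rank_one' hr (W.ρ x)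
  set S : Subgroup K := ⊤ with hS
  have hsub : IsSubnormal S := ⟨0, fun _ => ⊤, rfl, rfl, fun i => i.elim0⟩
  set θ : ↥S → ℂ := fun s => lam ↑s with hθ
  set V₀ : FDRep ℂ ↥S := FDRep.of (W.ρ.comp S.subtype) with hV₀def
  have hV₀ : V₀.character = θ := by
    funext s
    show LinearMap.trace ℂ W ((W.ρ.comp S.subtype) s) = lam ↑s
    rw [← hW]
    rfl
  have hθirr : IsIrredChar θ := by
    refine ⟨⟨V₀, hV₀⟩, ?_, ?_⟩
    · intro h0
      have := congrFun h0 1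
      simp [hθ, hlin] at this
    · intro α β hα hβ hα0 hβ0 heq
      obtain ⟨A, hA⟩ := hα
      obtain ⟨B, hB⟩ := hβ
      set f : K →* ↥S := (Subgroup.topEquiv.symm : K ≃* ↥S).toMonoidHom with hf
      have hfx : ∀ x : K, ((f x : ↥S) : K) = x := fun x => rfl
      have hfs : ∀ s : ↥S, f ↑s = s := fun s => Subtype.ext (hfx ↑s)
      refine hlam.1.2.2 (α ∘ f) (β ∘ f)
        ⟨FDRep.of (A.ρ.comp f), by funext x; rw [← hA]; rfl⟩
        ⟨FDRep.of (B.ρ.comp f), by funext x; rw [← hB]; rfl⟩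
        ?_ ?_ ?_
      · intro h0
        apply hα0
        funext s
        have := congrFun h0 ↑s
        simpa [hfs s] using this
      · intro h0
        apply hβ0
        funext s
        have := congrFun h0 ↑s
        simpa [hfs s] using this
      · funext x
        have := congrFun heq (f x)
        rw [hθ] at this
        simpa [hfx x] using this
  have hconst : (fun s : ↥S => lam ↑s) = θ + 0 := by simp [hθ]
  have key := hlam.2.2 S hsub θ hθirr ⟨0, isChar_zero', hconst⟩ V₀ hV₀
  set s : ↥S := ⟨k, Subgroup.mem_top k⟩ with hs
  have hdet : detHom V₀ s = lam k := by
    show LinearMap.det ((W.ρ.comp S.subtype) s) = lam k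
    rw [htr k]
    rfl
  set m := orderOf k with hm
  set n := orderOf (detHom V₀) with hn
  have h1 : (lam k) ^ m = 1 := by
    rw [htr k]
    have : LinearMap.det (W.ρ k) = detHom W k := rfl
    rw [this, ← map_pow, pow_orderOf_eq_one, map_one]
  have h2 : (lam k) ^ n = 1 := by
    rw [← hdet]
    have : (detHom V₀ s) ^ n = ((detHom V₀) ^ n) s := rfl
    rw [this, pow_orderOf_eq_one]
    rfl
  have hcop : Nat.Coprime m n := by
    rw [Nat.Coprime, Nat.eq_one_iff_not_exists_prime_dvd]
    intro p hp hpd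
    have hpm : p ∣ m := hpd.trans (Nat.gcd_dvd_left m n)
    have hpn : p ∣ n := hpd.trans (Nat.gcd_dvd_right m n)
    exact key p hp hpn (hk p hp hpm)
  have hd1 : orderOf (lam k) ∣ m := orderOf_dvd_of_pow_eq_one h1
  have hd2 : orderOf (lam k) ∣ n := orderOf_dvd_of_pow_eq_one h2
  have : orderOf (lam k) = 1 := Nat.eq_one_of_dvd_coprimes hcop hd1 hd2
  exact orderOf_eq_one_iff.mp this

/-- Let `G` be `π`-separable, `H ≤ G`, `μ` a `π`-special character of
`H`, `ν = μ^π`, and suppose `φ = ν^G ∈ I_π(G)`. If `λ` is a `π'`-special linear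
character of `H`, then `((μλ)^G)^π = φ`, i.e. `(μλ)^G` is a `π`-lift of `φ`. -/
theorem induced_product_is_pi_lift
    (π : Set ℕ) (G : Type) [Group G] [Fintype G] (hsep : IsPiSeparable π G)
    (H : Subgroup G) (μ : ↥H → ℂ) (hμ : IsPiSpecial π μ)
    (ν : ↥H → ℂ) (hν : ν = restPi π μ)
    (φ : G → ℂ) (hφ : φ = Ind H ν) (hφI : IsIrredPartialChar π φ)
    (lam : ↥H → ℂ) (hlam : IsPiSpecial πᶜ lam) (hlin : lam 1 = 1) :
    restPi π (Ind H (μ * lam)) = φ := by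
  have hlameq : ∀ h : ↥H, IsPiElement π h → lam h = 1 :=
    fun h hh => lam_eq_one_on_pi' π lam hlam hlin h hh
  have hmul : restPi π (μ * lam) = restPi π μ := by
    funext h
    rw [restPi, restPi]
    split_ifs with hh
    · rw [Pi.mul_apply, hlameq h hh, mul_one]
    · rfl
  rw [restPi_Ind', hmul, ← hν, ← hφ]
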